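/- Consider a triangle in ℝ² with vertices A, B, C and opposite side lengths a, b, c respectively (so c = |AB|). If (a+b)/c ≤ 1 + ε for some ε ∈ [0, 0.5], then the distance from C to the segment AB is at most 1.5·ε^{1/4}·|AB|. -/

import Mathlib

set_option maxHeartbeats 1000000


/-- In a thin triangle in `ℝ²` (`(a+b)/c ≤ 1+ε`), the distance from the apex `C`
to the segment `AB` is at most `1.5·ε^{1/4}·|AB|`. -/
theorem stmt_2 (A B C : EuclideanSpace ℝ (Fin 2)) (ε : ℝ)
    (hε : ε ∈ Set.Icc (0 : ℝ) 0.5)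
    (hc : 0 < dist A B)
    (h : (dist B C + dist A C) / dist A B ≤ 1 + ε) :
    Metric.infDist C (segment ℝ A B) ≤ 1.5 * ε ^ ((1 : ℝ) / 4) * dist A B := by
  obtain ⟨hε0, hε1⟩ := hε
  set a := dist B C with ha
  set b := dist A C with hb
  set c := dist A B with hcdef
  have ha0 : 0 ≤ a := dist_nonneg
  have hb0 : 0 ≤ b := dist_nonneg
  -- triangle inequalities
  have t1 : c ≤ a + b := by
    have := dist_triangle A C B
    rw [dist_comm C B] at this; linarith
  have t2 : a ≤ b + c := by
    have := dist_triangle B A C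
    rw [dist_comm B A] at this; linarith
  have t3 : b ≤ a + c := by
    have := dist_triangle A B C
    linarith
  have hab : a + b ≤ (1 + ε) * c := by
    rw [div_le_iff₀ hc] at h; linarith
  set t : ℝ := (b - a + c) / (2 * c) with ht
  have ht0 : 0 ≤ t := by
    apply div_nonneg; linarith; linarith
  have ht1 : t ≤ 1 := by
    rw [div_le_one (by linarith)]; linarith
  set P := (1 - t) • A + t • B with hP
  have hPmem : P ∈ segment ℝ A B := ⟨1 - t, t, by linarith, ht0, by ring, rfl⟩
  have hle : Metric.infDist C (segment ℝ A B) ≤ dist C P :=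
    Metric.infDist_le_dist_of_mem hPmem
  -- compute dist C P squared
  set v := C - A with hv
  set w := B - A with hw
  have hCP : C - P = v - t • w := by
    simp only [hP, hv, hw]
    module
  have hnv : ‖v‖ = b := by rw [hv, ← dist_eq_norm, hb, dist_comm]
  have hnw : ‖w‖ = c := by rw [hw, ← dist_eq_norm, hcdef, dist_comm]
  have hnvw : ‖v - w‖ = a := by
    have : v - w = C - B := by rw [hv, hw]; abel
    rw [this, ← dist_eq_norm, ha, dist_comm]
  have hinner : inner ℝ v w = (b ^ 2 + c ^ 2 - a ^ 2) / 2 := by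
    have e1 : ‖v - w‖ ^ 2 = ‖v‖ ^ 2 - 2 * inner ℝ v w + ‖w‖ ^ 2 :=
      norm_sub_sq_real v w
    rw [hnv, hnw, hnvw] at e1; linarith
  have hdsq : (dist C P) ^ 2 = ‖v‖ ^ 2 - 2 * t * inner ℝ v w + t ^ 2 * ‖w‖ ^ 2 := by
    rw [dist_eq_norm, hCP, norm_sub_sq_real, real_inner_smul_right, norm_smul,
      Real.norm_eq_abs, mul_pow, sq_abs]
    ring
  have hdsq2 : (dist C P) ^ 2 =
      ((a + b) - c) * (c * ((a + b) + c) - 2 * (b - a) ^ 2) / (4 * c) := by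
    rw [hdsq, hinner, hnv, hnw, ht]
    field_simp
    ring
  -- bound it
  have key : (dist C P) ^ 2 ≤ 0.625 * ε * c ^ 2 := by
    rw [hdsq2, div_le_iff₀ (by linarith)]
    have h1 : (a + b) - c ≤ ε * c := by linarith
    have h2 : 0 ≤ (a + b) - c := by linarith
    have h3 : c * ((a + b) + c) - 2 * (b - a) ^ 2 ≤ c * ((a + b) + c) := by
      linarith [sq_nonneg (b - a)]
    have h4 : c * ((a + b) + c) ≤ 2.5 * c ^ 2 := by nlinarith
    calc ((a + b) - c) * (c * ((a + b) + c) - 2 * (b - a) ^ 2)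
        ≤ ((a + b) - c) * (c * ((a + b) + c)) := by
          exact mul_le_mul_of_nonneg_left h3 h2
      _ ≤ (ε * c) * (2.5 * c ^ 2) := by
          apply mul_le_mul h1 h4 (by positivity) (by positivity)
      _ = 0.625 * ε * c ^ 2 * (4 * c) := by ring
  -- relate rpow quarter to sqrt
  have hsq : Real.sqrt ε = ε ^ ((1:ℝ)/2) := Real.sqrt_eq_rpow ε
  have hq2 : (ε ^ ((1:ℝ)/4)) ^ 2 = Real.sqrt ε := by
    rw [hsq, ← Real.rpow_natCast (ε ^ ((1:ℝ)/4)) 2, ← Real.rpow_mul hε0]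
    norm_num
  have hee : ε ≤ Real.sqrt ε := by
    have h1 : Real.sqrt ε ≤ 1 := by
      rw [show (1:ℝ) = Real.sqrt 1 by simp]
      exact Real.sqrt_le_sqrt (by linarith)
    nlinarith [Real.sq_sqrt hε0, Real.sqrt_nonneg ε]
  have hRHS0 : 0 ≤ 1.5 * ε ^ ((1:ℝ)/4) * c :=
    mul_nonneg (mul_nonneg (by norm_num) (Real.rpow_nonneg hε0 _)) hc.le
  have hfin : (dist C P) ^ 2 ≤ (1.5 * ε ^ ((1:ℝ)/4) * c) ^ 2 := by
    have : (1.5 * ε ^ ((1:ℝ)/4) * c) ^ 2 = 2.25 * Real.sqrt ε * c ^ 2 := by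
      rw [← hq2]; ring
    rw [this]
    nlinarith [sq_nonneg c]
  have : dist C P ≤ 1.5 * ε ^ ((1:ℝ)/4) * c := by
    nlinarith [dist_nonneg (x := C) (y := P)]
  linarith
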